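/- arXiv:1912.07702 — 4 statements merged into one kernel-verified Lean document; each statement's English description precedes it below -/
import Mathlib

section
/- Let E be a real inner product space, X ⊆ E a nonempty convex compact set, M > 0 and ε > 0. Let f : E → ℝ satisfy |f(x) − f(y)| ≤ M‖x − y‖ for all x, y ∈ X. Let x₁, …, x_k ∈ X and g₁, …, g_k ∈ E satisfy ‖g_i‖ ≤ M and f(x) ≥ f(x_i) + ⟨g_i, x − x_i⟩ for all x ∈ X and every i = 1, …, k. Define the cutting plane model m(x) := max_{1≤i≤k} ( f(x_i) + ⟨g_i, x − x_i⟩ ). Suppose x_{k+1} ∈ X satisfies m(x_{k+1}) ≤ m(x) for all x ∈ X. If min_{1≤i≤k} f(x_i) − m(x_{k+1}) > ε, then ‖x_{k+1} − x_i‖ > ε/M for every i = 1, …, k. -/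
open scoped RealInnerProductSpace

/-- Separation property of Kelley's cutting plane method (Proposition 2.1, first part). -/
theorem cutting_plane_separation
    {E : Type*} [NormedAddCommGroup E] [InnerProductSpace ℝ E]
    (X : Set E) (hXne : X.Nonempty) (hXconv : Convex ℝ X) (hXcomp : IsCompact X)
    (M ε : ℝ) (hM : 0 < M) (hε : 0 < ε)
    (f : E → ℝ) (hf : ∀ x ∈ X, ∀ y ∈ X, |f x - f y| ≤ M * ‖x - y‖)
    (k : ℕ) (hk : 0 < k)
    (x : Fin k → E) (g : Fin k → E)
    (hxX : ∀ i, x i ∈ X)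
    (hg : ∀ i, ‖g i‖ ≤ M)
    (hcut : ∀ i, ∀ y ∈ X, f (x i) + ⟪g i, y - x i⟫ ≤ f y)
    (m : E → ℝ)
    (hm : ∀ y, m y = ⨆ i : Fin k, (f (x i) + ⟪g i, y - x i⟫))
    (xnew : E) (hxnewX : xnew ∈ X)
    (hmin : ∀ y ∈ X, m xnew ≤ m y)
    (hgap : (⨅ i : Fin k, f (x i)) - m xnew > ε) :
    ∀ i : Fin k, ‖xnew - x i‖ > ε / M := by
  intro i
  haveI : Nonempty (Fin k) := ⟨⟨0, hk⟩⟩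
  have h1 : f (x i) + ⟪g i, xnew - x i⟫ ≤ m xnew := by
    rw [hm]
    exact le_ciSup (f := fun j : Fin k => f (x j) + ⟪g j, xnew - x j⟫) (Set.Finite.bddAbove (Set.finite_range _)) i
  have h2 : (⨅ j : Fin k, f (x j)) ≤ f (x i) :=
    ciInf_le (Set.Finite.bddBelow (Set.finite_range _)) i
  have h3 : ⟪g i, xnew - x i⟫ ≥ -(M * ‖xnew - x i‖) := by
    have := abs_real_inner_le_norm (g i) (xnew - x i)
    have h4 : ‖g i‖ * ‖xnew - x i‖ ≤ M * ‖xnew - x i‖ :=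
      mul_le_mul_of_nonneg_right (hg i) (norm_nonneg _)
    have := (abs_le.mp (this.trans h4)).1
    linarith
  have hlt : ε < M * ‖xnew - x i‖ := by linarith
  rw [gt_iff_lt, div_lt_iff₀ hM]
  linarith [hlt, mul_comm M ‖xnew - x i‖]
end

section
/- Let n be a positive integer, l, M, ε > 0, and let X ⊆ ℝⁿ be a nonempty set contained in a box with side length l. Equip ℝⁿ with the sup norm ‖z‖_∞ := max_j |z_j|. Let f : ℝⁿ → ℝ satisfy |f(x) − f(y)| ≤ M‖x − y‖_∞ for all x, y ∈ X. Let K be a positive integer and suppose x₁, …, x_{K+1} ∈ X and g₁, …, g_K ∈ ℝⁿ are such that: (a) for each i = 1,…,K, ∑_j |(g_i)_j| ≤ M and f(x) ≥ f(x_i) + ⟨g_i, x − x_i⟩ for all x ∈ X; (b) for each k = 1,…,K, the point x_{k+1} minimizes the cutting plane model m_k(x) := max_{1≤i≤k}( f(x_i) + ⟨g_i, x − x_i⟩ ) over X; (c) for each k = 1,…,K, min_{1≤i≤k} f(x_i) − m_k(x_{k+1}) > ε. Then K + 1 ≤ (lM/ε + 1)ⁿ. -/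
/-- Iteration complexity of Kelley's cutting plane method (Proposition 2.1, second part),
in `ℝⁿ` with the sup norm (the norm on `Fin n → ℝ` is `‖z‖ = max_j |z j|`). -/
theorem cutting_plane_complexity
    (n : ℕ) (hn : 0 < n) (l M ε : ℝ) (hl : 0 < l) (hM : 0 < M) (hε : 0 < ε)
    (X : Set (Fin n → ℝ)) (hXne : X.Nonempty) (a : Fin n → ℝ)
    (hbox : ∀ x ∈ X, ∀ j, x j ∈ Set.Icc (a j) (a j + l))
    (f : (Fin n → ℝ) → ℝ)
    (hf : ∀ x ∈ X, ∀ y ∈ X, |f x - f y| ≤ M * ‖x - y‖)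
    (K : ℕ) (hK : 0 < K)
    (x : ℕ → (Fin n → ℝ)) (g : ℕ → (Fin n → ℝ))
    (hx : ∀ i, 1 ≤ i → i ≤ K + 1 → x i ∈ X)
    (hgdual : ∀ i, 1 ≤ i → i ≤ K → ∑ j, |g i j| ≤ M)
    (hcut : ∀ i, 1 ≤ i → i ≤ K → ∀ y ∈ X,
      f (x i) + ∑ j, g i j * (y j - x i j) ≤ f y)
    (m : ℕ → (Fin n → ℝ) → ℝ)
    (hm : ∀ k y, m k y =
      ⨆ i : Fin k, (f (x (i + 1)) + ∑ j, g (i + 1) j * (y j - x (i + 1) j)))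
    (hmin : ∀ k, 1 ≤ k → k ≤ K → ∀ y ∈ X, m k (x (k + 1)) ≤ m k y)
    (hgap : ∀ k, 1 ≤ k → k ≤ K →
      (⨅ i : Fin k, f (x (i + 1))) - m k (x (k + 1)) > ε) :
    ((K : ℝ) + 1) ≤ (l * M / ε + 1) ^ n := by
  have hεM : 0 < ε / M := div_pos hε hM
  -- Separation: any earlier point is far (in sup norm) from x (q+1).
  have sep : ∀ p q : ℕ, 1 ≤ p → p ≤ q → q ≤ K → ε / M < ‖x (q + 1) - x p‖ := by
    intro p q hp hpq hqK
    have hq1 : 1 ≤ q := le_trans hp hpq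
    haveI : Nonempty (Fin q) := ⟨⟨0, by omega⟩⟩
    have hterm : f (x p) + ∑ j, g p j * (x (q + 1) j - x p j) ≤ m q (x (q + 1)) := by
      rw [hm]
      have := le_ciSup (f := fun i : Fin q =>
          f (x (i + 1)) + ∑ j, g (i + 1) j * (x (q + 1) j - x (i + 1) j))
        (Finite.bddAbove_range _) ⟨p - 1, by omega⟩
      simpa [Nat.sub_add_cancel hp] using this
    have hinf : (⨅ i : Fin q, f (x (i + 1))) ≤ f (x p) := by
      have := ciInf_le (f := fun i : Fin q => f (x (i + 1)))
        (Finite.bddBelow_range _) ⟨p - 1, by omega⟩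
      simpa [Nat.sub_add_cancel hp] using this
    have hg := hgap q hq1 hqK
    have h1 : ε < -(∑ j, g p j * (x (q + 1) j - x p j)) := by linarith
    have h2 : ε < |∑ j, g p j * (x (q + 1) j - x p j)| :=
      lt_of_lt_of_le h1 (neg_le_abs _)
    have h3 : |∑ j, g p j * (x (q + 1) j - x p j)| ≤ M * ‖x (q + 1) - x p‖ := by
      calc |∑ j, g p j * (x (q + 1) j - x p j)|
          ≤ ∑ j, |g p j * (x (q + 1) j - x p j)| := Finset.abs_sum_le_sum_abs _ _
        _ = ∑ j, |g p j| * |x (q + 1) j - x p j| := by simp [abs_mul]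
        _ ≤ ∑ j, |g p j| * ‖x (q + 1) - x p‖ := by
            refine Finset.sum_le_sum fun j _ => ?_
            refine mul_le_mul_of_nonneg_left ?_ (abs_nonneg _)
            have := norm_le_pi_norm (x (q + 1) - x p) j
            simpa [Real.norm_eq_abs] using this
        _ = (∑ j, |g p j|) * ‖x (q + 1) - x p‖ := by rw [← Finset.sum_mul]
        _ ≤ M * ‖x (q + 1) - x p‖ :=
            mul_le_mul_of_nonneg_right (hgdual p hp (by omega)) (norm_nonneg _)
    have h4 : ε < M * ‖x (q + 1) - x p‖ := lt_of_lt_of_le h2 h3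
    rw [div_lt_iff₀ hM]
    linarith [h4]
  -- Packing argument.
  set N : ℕ := Nat.floor (l * (M / ε)) + 1 with hN
  have key : ∀ p : ℕ, 1 ≤ p → p ≤ K + 1 → ∀ j,
      Nat.floor ((x p j - a j) * (M / ε)) < N := by
    intro p hp hpK j
    have hxp := hbox (x p) (hx p hp hpK) j
    have h0 : 0 ≤ x p j - a j := by linarith [hxp.1]
    have h1 : x p j - a j ≤ l := by linarith [hxp.2]
    have : (x p j - a j) * (M / ε) ≤ l * (M / ε) :=
      mul_le_mul_of_nonneg_right h1 (le_of_lt (div_pos hM hε))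
    have := Nat.floor_le_floor this
    omega
  let φ : Fin (K + 1) → (Fin n → Fin N) := fun p j =>
    ⟨Nat.floor ((x (p + 1) j - a j) * (M / ε)), key (p + 1) (by omega) (by omega) j⟩
  have far : ∀ p q : Fin (K + 1), (p : ℕ) < (q : ℕ) → φ p = φ q → False := by
    intro p q hlt hpq
    have hsep := sep (p + 1) q (by omega) (by omega) (by omega)
    have hsmall : ‖x (q + 1) - x (p + 1)‖ < ε / M := by
      rw [pi_norm_lt_iff hεM]
      intro j
      have hfl : Nat.floor ((x (p + 1) j - a j) * (M / ε)) =
          Nat.floor ((x (q + 1) j - a j) * (M / ε)) := by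
        have := congrFun hpq j
        simpa [φ, Fin.ext_iff] using this
      have hbp := hbox (x (p + 1)) (hx (p + 1) (by omega) (by omega)) j
      have hbq := hbox (x (q + 1)) (hx (q + 1) (by omega) (by omega)) j
      have h0p : (0:ℝ) ≤ (x (p + 1) j - a j) * (M / ε) :=
        mul_nonneg (by linarith [hbp.1]) (le_of_lt (div_pos hM hε))
      have h0q : (0:ℝ) ≤ (x (q + 1) j - a j) * (M / ε) :=
        mul_nonneg (by linarith [hbq.1]) (le_of_lt (div_pos hM hε))
      have hup : (x (p + 1) j - a j) * (M / ε) <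
          Nat.floor ((x (p + 1) j - a j) * (M / ε)) + 1 := Nat.lt_floor_add_one _
      have huq : (x (q + 1) j - a j) * (M / ε) <
          Nat.floor ((x (q + 1) j - a j) * (M / ε)) + 1 := Nat.lt_floor_add_one _
      have hlp : (Nat.floor ((x (p + 1) j - a j) * (M / ε)) : ℝ) ≤
          (x (p + 1) j - a j) * (M / ε) := Nat.floor_le h0p
      have hlq : (Nat.floor ((x (q + 1) j - a j) * (M / ε)) : ℝ) ≤
          (x (q + 1) j - a j) * (M / ε) := Nat.floor_le h0q
      have hdiff : |(x (q + 1) j - x (p + 1) j) * (M / ε)| < 1 := by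
        rw [abs_lt]
        constructor
        · have := hfl ▸ hup
          nlinarith [this, hlq]
        · nlinarith [hfl ▸ huq, hlp]
      have hMε : (0:ℝ) < M / ε := div_pos hM hε
      have : |x (q + 1) j - x (p + 1) j| * (M / ε) < 1 := by
        rwa [abs_mul, abs_of_pos hMε] at hdiff
      have habs : |x (q + 1) j - x (p + 1) j| < ε / M := by
        rw [lt_div_iff₀ hM]
        calc |x (q + 1) j - x (p + 1) j| * M
            = (|x (q + 1) j - x (p + 1) j| * (M / ε)) * ε := by
              field_simp
          _ < 1 * ε := by nlinarith
          _ = ε := one_mul ε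
      simpa [Real.norm_eq_abs] using habs
    linarith
  have hinj : Function.Injective φ := by
    intro p q hpq
    by_contra hne
    rcases lt_or_gt_of_ne (fun h : (p : ℕ) = (q : ℕ) => hne (Fin.ext h)) with h | h
    · exact far p q h hpq
    · exact far q p h hpq.symm
  have hcard : K + 1 ≤ N ^ n := by
    have := Fintype.card_le_of_injective φ hinj
    simpa using this
  have hNle : (N : ℝ) ≤ l * M / ε + 1 := by
    have h0 : (0:ℝ) ≤ l * (M / ε) := mul_nonneg hl.le (div_pos hM hε).le
    have := Nat.floor_le h0
    have heq : l * (M / ε) = l * M / ε := by ring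
    push_cast [hN]
    linarith [heq ▸ this]
  calc ((K : ℝ) + 1) ≤ (N : ℝ) ^ n := by
        exact_mod_cast hcard
    _ ≤ (l * M / ε + 1) ^ n := pow_le_pow_left₀ (Nat.cast_nonneg N) hNle n
end

section
/- Let E be a real normed vector space, A ⊆ E, and let M, M̲ ≥ 0, δ ≥ 0, λ ∈ (0,1], ε ≥ 0. Let f, g : E → ℝ satisfy |f(u) − f(w)| ≤ M‖u − w‖ and |g(u) − g(w)| ≤ M̲‖u − w‖ for all u, w ∈ A. Suppose x, x′ ∈ A satisfy ‖x − x′‖ ≤ δ and f(x′) − g(x′) ≤ λε. Then: (i) f(x) − g(x) ≤ (M + M̲)δ + λε. (ii) If moreover S ⊆ A is a nonempty set with x ∈ S, g(y) ≤ f(y) for all y ∈ S, and g(x) ≤ g(y) for all y ∈ S (i.e., x minimizes g over S), then inf_{y∈S} f(y) − inf_{y∈S} g(y) ≤ (M + M̲)δ + λε. -/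
/-- Abstract form of Proposition 3.1: propagation of saturation in DDP. -/
theorem saturation_propagation
    {E : Type*} [NormedAddCommGroup E] [NormedSpace ℝ E]
    (A : Set E) (M M' δ lam ε : ℝ)
    (hM : 0 ≤ M) (hM' : 0 ≤ M') (hδ : 0 ≤ δ)
    (hlam0 : 0 < lam) (hlam1 : lam ≤ 1) (hε : 0 ≤ ε)
    (f g : E → ℝ)
    (hf : ∀ u ∈ A, ∀ w ∈ A, |f u - f w| ≤ M * ‖u - w‖)
    (hg : ∀ u ∈ A, ∀ w ∈ A, |g u - g w| ≤ M' * ‖u - w‖)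
    (x x' : E) (hx : x ∈ A) (hx' : x' ∈ A)
    (hclose : ‖x - x'‖ ≤ δ)
    (hsat : f x' - g x' ≤ lam * ε) :
    (f x - g x ≤ (M + M') * δ + lam * ε) ∧
    (∀ S : Set E, S ⊆ A → S.Nonempty → x ∈ S →
      (∀ y ∈ S, g y ≤ f y) → (∀ y ∈ S, g x ≤ g y) →
      sInf (f '' S) - sInf (g '' S) ≤ (M + M') * δ + lam * ε) := by
  have h1 : f x - f x' ≤ M * δ := by
    have := hf x hx x' hx'
    have := abs_le.mp this
    nlinarith [this.2]
  have h2 : g x' - g x ≤ M' * δ := by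
    have := hg x' hx' x hx
    have := abs_le.mp this
    nlinarith [this.2, (norm_sub_rev x' x ▸ hclose : ‖x' - x‖ ≤ δ)]
  have key : f x - g x ≤ (M + M') * δ + lam * ε := by nlinarith
  refine ⟨key, fun S hSA hSne hxS hgf hgmin => ?_⟩
  have hgx_lb : ∀ z ∈ f '' S, g x ≤ z := by
    rintro z ⟨y, hy, rfl⟩
    exact le_trans (hgmin y hy) (hgf y hy)
  have hbdd : BddBelow (f '' S) := ⟨g x, hgx_lb⟩
  have hfx : sInf (f '' S) ≤ f x := csInf_le hbdd ⟨x, hxS, rfl⟩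
  have hgS : sInf (g '' S) = g x := by
    apply le_antisymm
    · exact csInf_le ⟨g x, by rintro z ⟨y, hy, rfl⟩; exact hgmin y hy⟩ ⟨x, hxS, rfl⟩
    · exact le_csInf ⟨g x, ⟨x, hxS, rfl⟩⟩ (by rintro z ⟨y, hy, rfl⟩; exact hgmin y hy)
  rw [hgS]; linarith
end

section
/- Let E be a real normed vector space, A ⊆ E, N a positive integer, and let M, M̲ ≥ 0, δ ≥ 0, c ≥ 0. For each i = 1, …, N let f_i, g_i : E → ℝ satisfy |f_i(u) − f_i(w)| ≤ M‖u − w‖ and |g_i(u) − g_i(w)| ≤ M̲‖u − w‖ for all u, w ∈ A, and let x_i, y_i ∈ A satisfy f_i(y_i) − g_i(y_i) ≤ c. Assume (1/N) ∑_{i=1}^N ‖x_i − y_i‖ ≤ δ. Then: (i) (1/N) ∑_{i=1}^N ( f_i(x_i) − g_i(x_i) ) ≤ (M + M̲)δ + c. (ii) If in addition for each i there is a nonempty set S_i ⊆ A with x_i ∈ S_i, g_i(y) ≤ f_i(y) for all y ∈ S_i, and g_i(x_i) ≤ g_i(y) for all y ∈ S_i, then (1/N) ∑_{i=1}^N inf_{y∈S_i}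 f_i(y) − (1/N) ∑_{i=1}^N inf_{y∈S_i} g_i(y) ≤ (M + M̲)δ + c. -/
/-- Abstract form of Lemma 5.1 (avg_distance) for the SDDP method. -/
theorem sddp_average_saturation
    {E : Type*} [NormedAddCommGroup E] [NormedSpace ℝ E]
    (A : Set E) (N : ℕ) (hN : 0 < N) (M M' δ c : ℝ)
    (hM : 0 ≤ M) (hM' : 0 ≤ M') (hδ : 0 ≤ δ) (hc : 0 ≤ c)
    (f g : Fin N → E → ℝ) (x y : Fin N → E)
    (hxA : ∀ i, x i ∈ A) (hyA : ∀ i, y i ∈ A)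
    (hf : ∀ i, ∀ u ∈ A, ∀ w ∈ A, |f i u - f i w| ≤ M * ‖u - w‖)
    (hg : ∀ i, ∀ u ∈ A, ∀ w ∈ A, |g i u - g i w| ≤ M' * ‖u - w‖)
    (hsat : ∀ i, f i (y i) - g i (y i) ≤ c)
    (havg : (1 / (N : ℝ)) * ∑ i, ‖x i - y i‖ ≤ δ) :
    ((1 / (N : ℝ)) * ∑ i, (f i (x i) - g i (x i)) ≤ (M + M') * δ + c) ∧
    (∀ S : Fin N → Set E,
      (∀ i, S i ⊆ A) → (∀ i, (S i).Nonempty) → (∀ i, x i ∈ S i) →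
      (∀ i, ∀ z ∈ S i, g i z ≤ f i z) → (∀ i, ∀ z ∈ S i, g i (x i) ≤ g i z) →
      (1 / (N : ℝ)) * ∑ i, sInf (f i '' S i) - (1 / (N : ℝ)) * ∑ i, sInf (g i '' S i) ≤
        (M + M') * δ + c) := by
  have hNpos : (0 : ℝ) < N := by exact_mod_cast hN
  have key : ∀ i, f i (x i) - g i (x i) ≤ (M + M') * ‖x i - y i‖ + c := by
    intro i
    have h1 := (abs_le.mp (hf i (x i) (hxA i) (y i) (hyA i))).2
    have h2 := (abs_le.mp (hg i (y i) (hyA i) (x i) (hxA i))).2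
    have h3 := hsat i
    have hnorm : ‖y i - x i‖ = ‖x i - y i‖ := norm_sub_rev _ _
    nlinarith [h1, h2, h3]
  have part1 : (1 / (N : ℝ)) * ∑ i, (f i (x i) - g i (x i)) ≤ (M + M') * δ + c := by
    have hsum : ∑ i, (f i (x i) - g i (x i)) ≤ ∑ i, ((M + M') * ‖x i - y i‖ + c) :=
      Finset.sum_le_sum fun i _ => key i
    have hsum2 : ∑ i, ((M + M') * ‖x i - y i‖ + c)
        = (M + M') * ∑ i, ‖x i - y i‖ + N * c := by
      rw [Finset.sum_add_distrib, ← Finset.mul_sum, Finset.sum_const, Finset.card_univ,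
        Fintype.card_fin, nsmul_eq_mul]
    have hMM' : 0 ≤ M + M' := by linarith
    have : (1 / (N : ℝ)) * ∑ i, (f i (x i) - g i (x i))
        ≤ (1 / (N : ℝ)) * ((M + M') * ∑ i, ‖x i - y i‖ + N * c) := by
      apply mul_le_mul_of_nonneg_left _ (by positivity)
      linarith [hsum, hsum2.symm.le]
    calc (1 / (N : ℝ)) * ∑ i, (f i (x i) - g i (x i))
        ≤ (1 / (N : ℝ)) * ((M + M') * ∑ i, ‖x i - y i‖ + N * c) := this
      _ = (M + M') * ((1 / (N : ℝ)) * ∑ i, ‖x i - y i‖) + c := by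
          field_simp
      _ ≤ (M + M') * δ + c := by
          have := mul_le_mul_of_nonneg_left havg hMM'
          linarith
  refine ⟨part1, ?_⟩
  intro S hSA hSne hxS hgf hgmin
  have hdiff : ∀ i, sInf (f i '' S i) - sInf (g i '' S i) ≤ f i (x i) - g i (x i) := by
    intro i
    have hginf : sInf (g i '' S i) = g i (x i) := by
      apply le_antisymm
      · exact csInf_le ⟨g i (x i), by rintro _ ⟨z, hz, rfl⟩; exact hgmin i z hz⟩
          ⟨x i, hxS i, rfl⟩
      · exact le_csInf ((hSne i).image _) (by rintro _ ⟨z, hz, rfl⟩; exact hgmin i z hz)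
    have hfinf : sInf (f i '' S i) ≤ f i (x i) := by
      have hbdd : BddBelow (f i '' S i) := by
        refine ⟨g i (x i), ?_⟩
        rintro _ ⟨z, hz, rfl⟩
        exact (hgmin i z hz).trans (hgf i z hz)
      exact csInf_le hbdd ⟨x i, hxS i, rfl⟩
    rw [hginf]
    linarith
  have : (1 / (N : ℝ)) * ∑ i, sInf (f i '' S i) - (1 / (N : ℝ)) * ∑ i, sInf (g i '' S i)
      = (1 / (N : ℝ)) * ∑ i, (sInf (f i '' S i) - sInf (g i '' S i)) := by
    rw [Finset.sum_sub_distrib, mul_sub]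
  rw [this]
  calc (1 / (N : ℝ)) * ∑ i, (sInf (f i '' S i) - sInf (g i '' S i))
      ≤ (1 / (N : ℝ)) * ∑ i, (f i (x i) - g i (x i)) := by
        apply mul_le_mul_of_nonneg_left (Finset.sum_le_sum fun i _ => hdiff i) (by positivity)
    _ ≤ (M + M') * δ + c := part1
end
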